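/- Every set S in D_0 (the minimal class of subsets of ℕ containing singletons and closed under sumset and additive Kleene star) has the form S = {a_1·n_1 + ... + a_k·n_k + a : n_1,...,n_k ∈ ℕ} for some a_1,...,a_k, a ∈ ℕ. -/

import Mathlib

open Pointwise

/-- The additive Kleene star `S* = {s_1 + … + s_k : k ≥ 0, s_i ∈ S}`. -/
def addStar (S : Set ℕ) : Set ℕ :=
  {n | ∃ l : List ℕ, (∀ x ∈ l, x ∈ S) ∧ l.sum = n}

/-- `D0`: the minimal class of subsets of `ℕ` containing all singletons and
closed under sumset and additive Kleene star. -/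
inductive D0 : Set ℕ → Prop
  | single (b : ℕ) : D0 {b}
  | add {S T : Set ℕ} : D0 S → D0 T → D0 (S + T)
  | star {S : Set ℕ} : D0 S → D0 (addStar S)

lemma zero_mem_addStar (S : Set ℕ) : 0 ∈ addStar S := ⟨[], by simp⟩

lemma add_mem_addStar {S : Set ℕ} {x y : ℕ} (hx : x ∈ addStar S) (hy : y ∈ addStar S) :
    x + y ∈ addStar S := by
  obtain ⟨l1, h1, e1⟩ := hx
  obtain ⟨l2, h2, e2⟩ := hy
  exact ⟨l1 ++ l2, by
    constructor
    · intro z hz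
      rcases List.mem_append.mp hz with h | h
      · exact h1 z h
      · exact h2 z h
    · simp [List.sum_append, e1, e2]⟩

lemma mem_addStar_of_mem {S : Set ℕ} {x : ℕ} (hx : x ∈ S) : x ∈ addStar S :=
  ⟨[x], by simp [hx]⟩

/-- `addStar S` as an additive submonoid of `ℕ`. -/
def addStarSubmonoid (S : Set ℕ) : AddSubmonoid ℕ where
  carrier := addStar S
  add_mem' := add_mem_addStar
  zero_mem' := zero_mem_addStar S

lemma sum_two_ite {k : ℕ} (f : Fin k → ℕ) (j1 j2 : Fin k) (h : j1 ≠ j2) (c1 c2 : ℕ) :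
    ∑ i, f i * (if i = j1 then c1 else if i = j2 then c2 else 0)
      = f j1 * c1 + f j2 * c2 := by
  have : ∀ i : Fin k, f i * (if i = j1 then c1 else if i = j2 then c2 else 0)
      = (if i = j1 then f i * c1 else 0) + (if i = j2 then f i * c2 else 0) := by
    intro i
    by_cases h1 : i = j1
    · subst h1; simp [h]
    · by_cases h2 : i = j2 <;> simp [h1, h2, Ne.symm h]
  rw [Finset.sum_congr rfl fun i _ => this i, Finset.sum_add_distrib,
    Finset.sum_ite_eq' Finset.univ j1 (fun i => f i * c1),
    Finset.sum_ite_eq' Finset.univ j2 (fun i => f i * c2)]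
  simp

theorem D0_linear_form (S : Set ℕ) (hS : D0 S) :
    ∃ (k : ℕ) (av : Fin k → ℕ) (a : ℕ),
      S = {n | ∃ m : Fin k → ℕ, n = (∑ i, av i * m i) + a} := by
  induction hS with
  | single b =>
    refine ⟨0, fun i => 0, b, ?_⟩
    ext n
    simp
  | add hS hT ihS ihT =>
    obtain ⟨k1, av1, a1, rfl⟩ := ihS
    obtain ⟨k2, av2, a2, rfl⟩ := ihT
    refine ⟨k1 + k2, Fin.append av1 av2, a1 + a2, ?_⟩
    ext n
    constructor
    · rintro ⟨s, ⟨m1, rfl⟩, t, ⟨m2, rfl⟩, rfl⟩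
      refine ⟨Fin.append m1 m2, ?_⟩
      rw [Fin.sum_univ_add]
      simp only [Fin.append_left, Fin.append_right]
      ring
    · rintro ⟨m, rfl⟩
      refine ⟨(∑ i, av1 i * m (Fin.castAdd k2 i)) + a1, ⟨_, rfl⟩,
        (∑ i, av2 i * m (Fin.natAdd k1 i)) + a2, ⟨_, rfl⟩, ?_⟩
      rw [Fin.sum_univ_add]
      simp only [Fin.append_left, Fin.append_right]
      ring
  | @star T hT ihT =>
    obtain ⟨k, av, a, rfl⟩ := ihT
    set T : Set ℕ := {n | ∃ m : Fin k → ℕ, n = (∑ i, av i * m i) + a} with hTdef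
    rcases Nat.eq_zero_or_pos a with rfl | ha
    · -- a = 0 : T is already a submonoid, addStar T = T
      refine ⟨k, av, 0, ?_⟩
      have hzero : (0 : ℕ) ∈ T := ⟨fun _ => 0, by simp⟩
      have hadd : ∀ x ∈ T, ∀ y ∈ T, x + y ∈ T := by
        rintro x ⟨m1, rfl⟩ y ⟨m2, rfl⟩
        refine ⟨m1 + m2, ?_⟩
        simp [mul_add, Finset.sum_add_distrib]
      have : addStar T = T := by
        apply Set.Subset.antisymm
        · rintro n ⟨l, hl, rfl⟩
          induction l with
          | nil => exact hzero
          | cons x xs ih =>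
            exact hadd x (hl x List.mem_cons_self) _
              (ih fun z hz => hl z (List.mem_cons_of_mem x hz))
        · exact fun x hx => mem_addStar_of_mem hx
      rw [this]
    · -- a > 0
      set M : AddSubmonoid ℕ := addStarSubmonoid T with hM
      have hMcar : addStar T = (M : Set ℕ) := rfl
      have haM : a ∈ M := mem_addStar_of_mem ⟨fun _ => 0, by simp⟩
      set g : ℕ → ℕ := fun r => sInf {y | y ∈ M ∧ y % a = r} with hg
      have hgM : ∀ r, g r ∈ M := by
        intro r
        rcases Set.eq_empty_or_nonempty {y | y ∈ M ∧ y % a = r} with h | h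
        · simp [hg, h, Nat.sInf_empty, zero_mem]
        · exact (Nat.sInf_mem h).1
      refine ⟨a + 1, fun i => if (i : ℕ) < a then g i else a, 0, ?_⟩
      rw [hMcar]
      ext n
      constructor
      · -- n ∈ M → linear form
        intro hn
        have hr : n % a < a := Nat.mod_lt _ ha
        have hne : ({y | y ∈ M ∧ y % a = n % a}).Nonempty := ⟨n, hn, rfl⟩
        have hmem := Nat.sInf_mem hne
        have hle : g (n % a) ≤ n := Nat.sInf_le ⟨hn, rfl⟩
        have hmod : g (n % a) % a = n % a := hmem.2
        have hdvd : a ∣ n - g (n % a) := by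
          have : g (n % a) ≡ n [MOD a] := by
            unfold Nat.ModEq
            omega
          exact (Nat.modEq_iff_dvd' hle).mp this
        obtain ⟨q, hq⟩ := hdvd
        set j1 : Fin (a + 1) := ⟨n % a, by omega⟩
        set j2 : Fin (a + 1) := ⟨a, by omega⟩
        have hj12 : j1 ≠ j2 := by
          simp only [j1, j2, Fin.mk.injEq, ne_eq]
          omega
        refine ⟨fun i => if i = j1 then 1 else if i = j2 then q else 0, ?_⟩
        rw [sum_two_ite _ j1 j2 hj12]
        simp only [j1, j2]
        rw [if_pos hr, if_neg (by omega)]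
        omega
      · -- linear form → n ∈ M
        rintro ⟨m, rfl⟩
        rw [add_zero]
        refine AddSubmonoid.sum_mem M fun i _ => ?_
        have hbase : (if (i : ℕ) < a then g i else a) ∈ M := by
          split
          · exact hgM _
          · exact haM
        have : (if (i : ℕ) < a then g (i : ℕ) else a) * m i
            = m i • (if (i : ℕ) < a then g (i : ℕ) else a) := by
          rw [smul_eq_mul, mul_comm]
        rw [this]
        exact AddSubmonoid.nsmul_mem M hbase (m i)
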